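/- For probability measures p on compact X ⊂ ℝ^{d_X} and q on compact Y ⊂ ℝ^{d_Y}, the inner-product Gromov-Wasserstein cost admits the decomposition GW(p,q) = ∬⟨x,x'⟩² dp dp + ∬⟨y,y'⟩² dq dq - 2 sup_{π∈Π(p,q)} ‖∫ x yᵀ dπ(x,y)‖_F², where ‖·‖_F is the Frobenius norm; in particular the quadratic GW objective with cost (⟨x,x'⟩ - ⟨y,y'⟩)² reduces to maximizing the squared Frobenius norm of the cross-correlation matrix over couplings. -/

import Mathlib

open MeasureTheory

lemma double_integral_expand {α : Type*} [MeasurableSpace α] {ι : Type*} [Fintype ι]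
    (μ : Measure α) [IsProbabilityMeasure μ]
    (φ : ι → α → ℝ) (hφ : ∀ k, Measurable (φ k))
    (C : ℝ) (hC : ∀ᵐ z ∂μ, ∀ k, |φ k z| ≤ C)
    (ε : ι → ℝ) :
    ∫ z, ∫ z', (∑ k, ε k * (φ k z * φ k z')) ^ 2 ∂μ ∂μ
      = ∑ k, ∑ l, ε k * ε l * (∫ z, φ k z * φ l z ∂μ) ^ 2 := by
  classical
  set C' := max C 0 with hC'def
  have hC'0 : 0 ≤ C' := le_max_right _ _
  have hC' : ∀ᵐ z ∂μ, ∀ k, |φ k z| ≤ C' :=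
    hC.mono fun z hz k => (hz k).trans (le_max_left _ _)
  have hInt : ∀ k l, Integrable (fun z => φ k z * φ l z) μ := by
    intro k l
    refine Integrable.mono' (integrable_const (C' * C'))
      ((hφ k).mul (hφ l)).aestronglyMeasurable ?_
    filter_upwards [hC'] with z hz
    rw [Real.norm_eq_abs, abs_mul]
    exact mul_le_mul (hz k) (hz l) (abs_nonneg _) hC'0
  set M : ι → ι → ℝ := fun k l => ∫ z, φ k z * φ l z ∂μ with hM
  have expand : ∀ z z', (∑ k, ε k * (φ k z * φ k z')) ^ 2
      = ∑ k, ∑ l, (ε k * ε l * (φ k z * φ l z)) * (φ k z' * φ l z') := by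
    intro z z'
    rw [sq, Finset.sum_mul_sum]
    exact Finset.sum_congr rfl fun k _ => Finset.sum_congr rfl fun l _ => by ring
  have inner_eq : ∀ᵐ z ∂μ,
      ∫ z', (∑ k, ε k * (φ k z * φ k z')) ^ 2 ∂μ
        = ∑ k, ∑ l, (ε k * ε l * (φ k z * φ l z)) * M k l := by
    filter_upwards with z
    simp_rw [expand z]
    rw [integral_finset_sum _ (fun k _ => integrable_finset_sum _
      (fun l _ => ((hInt k l).const_mul _)))]
    refine Finset.sum_congr rfl fun k _ => ?_
    rw [integral_finset_sum _ (fun l _ => ((hInt k l).const_mul _))]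
    exact Finset.sum_congr rfl fun l _ => MeasureTheory.integral_const_mul _ _
  rw [integral_congr_ae inner_eq]
  have rearrange : ∀ z, (∑ k, ∑ l, (ε k * ε l * (φ k z * φ l z)) * M k l)
      = ∑ k, ∑ l, (ε k * ε l * M k l) * (φ k z * φ l z) := by
    intro z
    exact Finset.sum_congr rfl fun k _ => Finset.sum_congr rfl fun l _ => by ring
  simp_rw [rearrange]
  rw [integral_finset_sum _ (fun k _ => integrable_finset_sum _
    (fun l _ => ((hInt k l).const_mul _)))]
  refine Finset.sum_congr rfl fun k _ => ?_
  rw [integral_finset_sum _ (fun l _ => ((hInt k l).const_mul _))]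
  refine Finset.sum_congr rfl fun l _ => ?_
  rw [MeasureTheory.integral_const_mul]
  ring

lemma coord_abs_le_norm {n : ℕ} (v : EuclideanSpace ℝ (Fin n)) (i : Fin n) : |v i| ≤ ‖v‖ := by
  rw [EuclideanSpace.norm_eq]
  have h : |v i| = Real.sqrt (‖v i‖ ^ 2) := by rw [Real.sqrt_sq_eq_abs]; simp
  rw [h]
  apply Real.sqrt_le_sqrt
  exact Finset.single_le_sum (f := fun j => ‖v j‖ ^ 2) (fun j _ => sq_nonneg _) (Finset.mem_univ i)

lemma measurable_coord {n : ℕ} (i : Fin n) :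
    Measurable (fun v : EuclideanSpace ℝ (Fin n) => v i) := by fun_prop

lemma sInf_affine_image (c : ℝ) (S : Set ℝ) (hne : S.Nonempty) (hbdd : BddAbove S) :
    sInf ((fun t => c - 2 * t) '' S) = c - 2 * sSup S := by
  refine IsGLB.csInf_eq ?_ (hne.image _)
  constructor
  · rintro y ⟨t, ht, rfl⟩
    have := le_csSup hbdd ht
    show c - 2 * sSup S ≤ c - 2 * t
    linarith
  · intro b hb
    have h1 : sSup S ≤ (c - b) / 2 := by
      refine csSup_le hne fun t ht => ?_
      have h2 : b ≤ c - 2 * t := hb (Set.mem_image_of_mem _ ht)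
      linarith
    linarith

/-- For compactly supported probability measures on Euclidean spaces, the inner-product
Gromov-Wasserstein cost decomposes into marginal terms minus twice the supremum over couplings
of the squared Frobenius norm of the cross-correlation matrix `∫ x yᵀ dπ`. -/
theorem gw_inner_product_decomposition {dX dY : ℕ}
    (p : Measure (EuclideanSpace ℝ (Fin dX))) (q : Measure (EuclideanSpace ℝ (Fin dY)))
    [IsProbabilityMeasure p] [IsProbabilityMeasure q]
    (hp : ∃ K, IsCompact K ∧ p Kᶜ = 0) (hq : ∃ K, IsCompact K ∧ q Kᶜ = 0)
    (Couplings : Set (Measure (EuclideanSpace ℝ (Fin dX) × EuclideanSpace ℝ (Fin dY))))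
    (hCouplings : Couplings =
      {π | π.map Prod.fst = p ∧ π.map Prod.snd = q}) :
    sInf ((fun π : Measure (EuclideanSpace ℝ (Fin dX) × EuclideanSpace ℝ (Fin dY)) =>
        ∫ z, ∫ z', ((∑ i, z.1 i * z'.1 i) - ∑ j, z.2 j * z'.2 j) ^ 2 ∂π ∂π) '' Couplings) =
      (∫ x, ∫ x', (∑ i, x i * x' i) ^ 2 ∂p ∂p) +
        (∫ y, ∫ y', (∑ j, y j * y' j) ^ 2 ∂q ∂q) -
        2 * sSup ((fun π : Measure (EuclideanSpace ℝ (Fin dX) × EuclideanSpace ℝ (Fin dY)) =>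
          ∑ i, ∑ j, (∫ z, z.1 i * z.2 j ∂π) ^ 2) '' Couplings) := by
  classical
  obtain ⟨Kx, hKx, hpKx⟩ := hp
  obtain ⟨Ky, hKy, hqKy⟩ := hq
  obtain ⟨Rx, hRx⟩ := hKx.isBounded.exists_norm_le
  obtain ⟨Ry, hRy⟩ := hKy.isBounded.exists_norm_le
  set G : Measure (EuclideanSpace ℝ (Fin dX) × EuclideanSpace ℝ (Fin dY)) → ℝ :=
    fun π => ∑ i, ∑ j, (∫ z, z.1 i * z.2 j ∂π) ^ 2 with hG
  set F : Measure (EuclideanSpace ℝ (Fin dX) × EuclideanSpace ℝ (Fin dY)) → ℝ :=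
    fun π => ∫ z, ∫ z', ((∑ i, z.1 i * z'.1 i) - ∑ j, z.2 j * z'.2 j) ^ 2 ∂π ∂π with hF
  have hpae : ∀ᵐ x ∂p, x ∈ Kx := by
    rw [ae_iff]
    exact hpKx
  have hqae : ∀ᵐ y ∂q, y ∈ Ky := by
    rw [ae_iff]
    exact hqKy
  -- marginal term for p
  have hA : (∫ x, ∫ x', (∑ i, x i * x' i) ^ 2 ∂p ∂p)
      = ∑ i, ∑ i', (∫ x, x i * x i' ∂p) ^ 2 := by
    have h := double_integral_expand p (fun i (x : EuclideanSpace ℝ (Fin dX)) => x i)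
      (fun i => measurable_coord i) Rx
      (hpae.mono fun x hx i => (coord_abs_le_norm x i).trans (hRx x hx))
      (fun _ => (1 : ℝ))
    simpa using h
  have hB : (∫ y, ∫ y', (∑ j, y j * y' j) ^ 2 ∂q ∂q)
      = ∑ j, ∑ j', (∫ y, y j * y j' ∂q) ^ 2 := by
    have h := double_integral_expand q (fun j (y : EuclideanSpace ℝ (Fin dY)) => y j)
      (fun j => measurable_coord j) Ry
      (hqae.mono fun y hy j => (coord_abs_le_norm y j).trans (hRy y hy))
      (fun _ => (1 : ℝ))
    simpa using h
  -- the key pointwise identity on couplings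
  have key : ∀ π ∈ Couplings, F π =
      (∫ x, ∫ x', (∑ i, x i * x' i) ^ 2 ∂p ∂p) +
      (∫ y, ∫ y', (∑ j, y j * y' j) ^ 2 ∂q ∂q) - 2 * G π := by
    intro π hπ
    rw [hCouplings] at hπ
    obtain ⟨hπ1, hπ2⟩ := hπ
    have hπuniv : π Set.univ = 1 := by
      have h1 : π.map Prod.fst Set.univ = π Set.univ := by
        rw [Measure.map_apply measurable_fst MeasurableSet.univ]; simp
      rw [← h1, hπ1]; exact measure_univ
    have hπprob : IsProbabilityMeasure π := ⟨hπuniv⟩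
    have hπae : ∀ᵐ z ∂π, z.1 ∈ Kx ∧ z.2 ∈ Ky := by
      have h1 : π (Prod.fst ⁻¹' Kxᶜ) = 0 := by
        rw [← Measure.map_apply measurable_fst hKx.isClosed.measurableSet.compl, hπ1]
        exact hpKx
      have h2 : π (Prod.snd ⁻¹' Kyᶜ) = 0 := by
        rw [← Measure.map_apply measurable_snd hKy.isClosed.measurableSet.compl, hπ2]
        exact hqKy
      rw [ae_iff]
      refine measure_mono_null ?_ (measure_union_null h1 h2)
      intro z hz
      simp only [Set.mem_setOf_eq, not_and_or] at hz
      simpa using hz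
    set φ : (Fin dX ⊕ Fin dY) → (EuclideanSpace ℝ (Fin dX) × EuclideanSpace ℝ (Fin dY)) → ℝ :=
      fun k z => Sum.elim (fun i => z.1 i) (fun j => z.2 j) k with hφ
    set ε : (Fin dX ⊕ Fin dY) → ℝ := Sum.elim (fun _ => (1 : ℝ)) (fun _ => (-1 : ℝ)) with hε
    have hφmeas : ∀ k, Measurable (φ k) := by
      rintro (i | j)
      · exact (measurable_coord i).comp measurable_fst
      · exact (measurable_coord j).comp measurable_snd
    have hbound : ∀ᵐ z ∂π, ∀ k, |φ k z| ≤ max Rx Ry := by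
      filter_upwards [hπae] with z hz
      rintro (i | j)
      · exact ((coord_abs_le_norm z.1 i).trans (hRx z.1 hz.1)).trans (le_max_left _ _)
      · exact ((coord_abs_le_norm z.2 j).trans (hRy z.2 hz.2)).trans (le_max_right _ _)
    have hmain := double_integral_expand π φ hφmeas (max Rx Ry) hbound ε
    have hshape : ∀ z z' : EuclideanSpace ℝ (Fin dX) × EuclideanSpace ℝ (Fin dY),
        ((∑ i, z.1 i * z'.1 i) - ∑ j, z.2 j * z'.2 j) = ∑ k, ε k * (φ k z * φ k z') := by
      intro z z'
      rw [Fintype.sum_sum_type]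
      simp [hφ, hε, sub_eq_add_neg]
    have hmarg1 : ∀ i i' : Fin dX,
        (∫ z : EuclideanSpace ℝ (Fin dX) × EuclideanSpace ℝ (Fin dY), z.1 i * z.1 i' ∂π)
          = ∫ x, x i * x i' ∂p := by
      intro i i'
      rw [← hπ1]
      exact (integral_map measurable_fst.aemeasurable
        (((measurable_coord i).mul (measurable_coord i')).aestronglyMeasurable)).symm
    have hmarg2 : ∀ j j' : Fin dY,
        (∫ z : EuclideanSpace ℝ (Fin dX) × EuclideanSpace ℝ (Fin dY), z.2 j * z.2 j' ∂π)
          = ∫ y, y j * y j' ∂q := by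
      intro j j'
      rw [← hπ2]
      exact (integral_map measurable_snd.aemeasurable
        (((measurable_coord j).mul (measurable_coord j')).aestronglyMeasurable)).symm
    have hFπ : F π = ∑ k, ∑ l, ε k * ε l * (∫ z, φ k z * φ l z ∂π) ^ 2 := by
      rw [hF]
      simp only [hshape]
      exact hmain
    rw [hFπ, hA, hB, hG]
    rw [Fintype.sum_sum_type]
    simp only [Fintype.sum_sum_type]
    have hswap : ∀ (j : Fin dY) (i : Fin dX),
        (∫ z : EuclideanSpace ℝ (Fin dX) × EuclideanSpace ℝ (Fin dY),
            φ (Sum.inr j) z * φ (Sum.inl i) z ∂π)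
          = ∫ z : EuclideanSpace ℝ (Fin dX) × EuclideanSpace ℝ (Fin dY), z.1 i * z.2 j ∂π := by
      intro j i
      have he : (fun z : EuclideanSpace ℝ (Fin dX) × EuclideanSpace ℝ (Fin dY) =>
          φ (Sum.inr j) z * φ (Sum.inl i) z)
          = fun z : EuclideanSpace ℝ (Fin dX) × EuclideanSpace ℝ (Fin dY) => z.1 i * z.2 j := by
        funext z; simp [hφ, mul_comm]
      rw [he]
    simp only [hφ, hε, Sum.elim_inl, Sum.elim_inr, one_mul, mul_one, neg_mul, mul_neg,
      neg_neg, one_mul] at hswap ⊢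
    simp only [hswap, hmarg1, hmarg2]
    simp only [Finset.sum_add_distrib]
    rw [Finset.sum_comm (s := (Finset.univ : Finset (Fin dY)))
      (t := (Finset.univ : Finset (Fin dX)))
      (f := fun j i => -(∫ z : EuclideanSpace ℝ (Fin dX) × EuclideanSpace ℝ (Fin dY),
        z.1 i * z.2 j ∂π) ^ 2)]
    simp only [Finset.sum_neg_distrib]
    ring
  -- nonemptiness and boundedness
  have hmem : p.prod q ∈ Couplings := by
    rw [hCouplings]
    constructor
    · rw [Measure.map_fst_prod]; simp
    · rw [Measure.map_snd_prod]; simp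
  have hne : (G '' Couplings).Nonempty := ⟨G (p.prod q), Set.mem_image_of_mem _ hmem⟩
  have hbddG : BddAbove (G '' Couplings) := by
    refine ⟨(dX : ℝ) * dY * (max Rx 0 * max Ry 0) ^ 2, ?_⟩
    rintro y ⟨π, hπ, rfl⟩
    rw [hCouplings] at hπ
    obtain ⟨hπ1, hπ2⟩ := hπ
    have hπuniv : π Set.univ = 1 := by
      have h1 : π.map Prod.fst Set.univ = π Set.univ := by
        rw [Measure.map_apply measurable_fst MeasurableSet.univ]; simp
      rw [← h1, hπ1]; exact measure_univ
    have hπprob : IsProbabilityMeasure π := ⟨hπuniv⟩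
    have hπae : ∀ᵐ z ∂π, z.1 ∈ Kx ∧ z.2 ∈ Ky := by
      have h1 : π (Prod.fst ⁻¹' Kxᶜ) = 0 := by
        rw [← Measure.map_apply measurable_fst hKx.isClosed.measurableSet.compl, hπ1]
        exact hpKx
      have h2 : π (Prod.snd ⁻¹' Kyᶜ) = 0 := by
        rw [← Measure.map_apply measurable_snd hKy.isClosed.measurableSet.compl, hπ2]
        exact hqKy
      rw [ae_iff]
      refine measure_mono_null ?_ (measure_union_null h1 h2)
      intro z hz
      simp only [Set.mem_setOf_eq, not_and_or] at hz
      simpa using hz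
    have hsq : ∀ (i : Fin dX) (j : Fin dY),
        (∫ z : EuclideanSpace ℝ (Fin dX) × EuclideanSpace ℝ (Fin dY), z.1 i * z.2 j ∂π) ^ 2
          ≤ (max Rx 0 * max Ry 0) ^ 2 := by
      intro i j
      have hb : ‖∫ z : EuclideanSpace ℝ (Fin dX) × EuclideanSpace ℝ (Fin dY),
          z.1 i * z.2 j ∂π‖ ≤ max Rx 0 * max Ry 0 := by
        have h := norm_integral_le_of_norm_le_const (μ := π)
          (C := max Rx 0 * max Ry 0)
          (f := fun z : EuclideanSpace ℝ (Fin dX) × EuclideanSpace ℝ (Fin dY) =>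
            z.1 i * z.2 j) ?_
        · simpa [hπuniv] using h
        · filter_upwards [hπae] with z hz
          rw [Real.norm_eq_abs, abs_mul]
          have h1 : |z.1 i| ≤ max Rx 0 :=
            (coord_abs_le_norm z.1 i).trans ((hRx z.1 hz.1).trans (le_max_left _ _))
          have h2 : |z.2 j| ≤ max Ry 0 :=
            (coord_abs_le_norm z.2 j).trans ((hRy z.2 hz.2).trans (le_max_left _ _))
          exact mul_le_mul h1 h2 (abs_nonneg _) (le_max_right _ _)
      rw [Real.norm_eq_abs] at hb
      calc (∫ z : EuclideanSpace ℝ (Fin dX) × EuclideanSpace ℝ (Fin dY),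
            z.1 i * z.2 j ∂π) ^ 2
          = |∫ z : EuclideanSpace ℝ (Fin dX) × EuclideanSpace ℝ (Fin dY),
            z.1 i * z.2 j ∂π| ^ 2 := by rw [sq_abs]
        _ ≤ (max Rx 0 * max Ry 0) ^ 2 := by
            exact pow_le_pow_left₀ (abs_nonneg _) hb 2
    calc G π ≤ ∑ _i : Fin dX, ∑ _j : Fin dY, (max Rx 0 * max Ry 0) ^ 2 := by
          exact Finset.sum_le_sum fun i _ => Finset.sum_le_sum fun j _ => hsq i j
      _ = (dX : ℝ) * dY * (max Rx 0 * max Ry 0) ^ 2 := by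
          simp [Finset.sum_const]; ring
  -- assemble
  have himg : (F '' Couplings) =
      (fun t => ((∫ x, ∫ x', (∑ i, x i * x' i) ^ 2 ∂p ∂p) +
        (∫ y, ∫ y', (∑ j, y j * y' j) ^ 2 ∂q ∂q)) - 2 * t) '' (G '' Couplings) := by
    rw [← Set.image_comp]
    exact Set.image_congr fun π hπ => (key π hπ)
  show sInf (F '' Couplings) = _
  rw [himg, sInf_affine_image _ _ hne hbddG]
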